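/- Let α > 0, let k : ℝ → ℝ be 2π-periodic with k ≥ 1, and let η₁, η₂ : ℝ → ℝ be differentiable 2π-periodic functions. Define f(z) = |z|^α (η₁(θ) + i η₂(θ)) and μ(z) = ((1 − k(θ))/(1 + k(θ))) z z̄⁻¹ for z = ρ e^{iθ} ≠ 0. Then f satisfies the Beltrami equation ∂̄f(z) = μ(z) ∂f(z) at every z ≠ 0 if and only if (η₁, η₂) satisfies the first order system η₁′(θ) = −α k(θ) η₂(θ) and η₂′(θ) = α k(θ) η₁(θ) for all θ ∈ ℝ. -/

import Mathlib

/-- The Wirtinger derivative `∂̄f(z) = (1/2)(∂f/∂x + i ∂f/∂y)` of a map `f : ℂ → ℂ`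
viewed as real-differentiable at `z`. -/
noncomputable def wirtingerBar (f : ℂ → ℂ) (z : ℂ) : ℂ :=
  (1 / 2) * (fderiv ℝ f z 1 + Complex.I * fderiv ℝ f z Complex.I)

/-- The Wirtinger derivative `∂f(z) = (1/2)(∂f/∂x − i ∂f/∂y)`. -/
noncomputable def wirtinger (f : ℂ → ℂ) (z : ℂ) : ℂ :=
  (1 / 2) * (fderiv ℝ f z 1 - Complex.I * fderiv ℝ f z Complex.I)

section BeltramiAux
open Complex

lemma periodic_deriv' {g : ℝ → ℝ} {c : ℝ} (h : Function.Periodic g c) :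
    Function.Periodic (deriv g) c := fun x => by
  rw [← deriv_comp_add_const]
  congr 1
  funext y; exact h y

lemma beltrami_algebra (ρ z : ℂ) (hρ : ρ ≠ 0) (hz : z ≠ 0) (K : ℂ) (hK : 1 + K ≠ 0)
    (g g' A : ℂ) :
    ρ/2 * ((starRingEnd ℂ z))⁻¹ * (A * g + Complex.I * g') =
      ((1 - K)/(1 + K)) * z * ((starRingEnd ℂ z))⁻¹ * (ρ/2 * z⁻¹ * (A * g - Complex.I * g'))
    ↔ g' = Complex.I * A * K * g := by
  have hcz : (starRingEnd ℂ) z ≠ 0 := by simpa using hz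
  rw [show ((1 - K)/(1 + K)) * z * ((starRingEnd ℂ z))⁻¹ * (ρ/2 * z⁻¹ * (A * g - Complex.I * g'))
      = ρ/2 * ((starRingEnd ℂ z))⁻¹ * ((1 - K)/(1+K) * (A * g - Complex.I * g')) from by
    field_simp]
  rw [mul_right_inj' (mul_ne_zero (div_ne_zero hρ two_ne_zero) (inv_ne_zero hcz))]
  rw [div_mul_eq_mul_div, eq_comm, div_eq_iff hK, eq_comm]
  constructor
  · intro h1
    have h2 : Complex.I * g' = -(K * A) * g := by linear_combination (1/2 : ℂ) * h1
    linear_combination (-Complex.I) * h2 + g' * Complex.I_sq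
  · intro h
    rw [h]
    linear_combination (2*A*K*g) * Complex.I_sq

lemma beltrami_key(α : ℝ) (η₁ η₂ : ℝ → ℝ)
    (hη₁d : Differentiable ℝ η₁) (hη₂d : Differentiable ℝ η₂)
    (hη₁per : Function.Periodic η₁ (2 * Real.pi))
    (hη₂per : Function.Periodic η₂ (2 * Real.pi))
    (f : ℂ → ℂ)
    (hf : ∀ z : ℂ, f z = (↑(‖z‖ ^ α) : ℂ) * (↑(η₁ z.arg) + ↑(η₂ z.arg) * Complex.I))
    (z₀ : ℂ) (hz₀ : z₀ ≠ 0) :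
    DifferentiableAt ℝ f z₀ ∧
    wirtingerBar f z₀ = (↑(‖z₀‖ ^ α) / 2) * ((starRingEnd ℂ z₀)⁻¹) *
        ((α : ℂ) * (↑(η₁ z₀.arg) + ↑(η₂ z₀.arg) * I) +
          I * (↑(deriv η₁ z₀.arg) + ↑(deriv η₂ z₀.arg) * I)) ∧
    wirtinger f z₀ = (↑(‖z₀‖ ^ α) / 2) * z₀⁻¹ *
        ((α : ℂ) * (↑(η₁ z₀.arg) + ↑(η₂ z₀.arg) * I) -
          I * (↑(deriv η₁ z₀.arg) + ↑(deriv η₂ z₀.arg) * I)) := by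
  set θ₀ := z₀.arg with hθ₀
  set w : ℂ := Complex.exp (-(θ₀:ℂ) * I) with hwdef
  have hwne : w ≠ 0 := Complex.exp_ne_zero _
  have habs : (0:ℝ) < ‖z₀‖ := norm_pos_iff.mpr hz₀
  have hzw : z₀ * w = (‖z₀‖ : ℂ) := by
    conv_lhs => rw [← Complex.norm_mul_exp_arg_mul_I z₀]
    rw [mul_assoc, ← Complex.exp_add]
    norm_num [hθ₀]
  have hslit : z₀ * w ∈ Complex.slitPlane := by
    rw [hzw]; exact Or.inl (by simpa using habs)
  set t : ℂ → ℝ := fun z => (Complex.log (z * w)).im + θ₀ with htdef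
  set u : ℂ → ℝ := fun z => (Complex.log (z * w)).re with hudef
  set F : ℂ → ℂ := fun z => (↑(Real.exp (α * u z)) : ℂ) * (↑(η₁ (t z)) + ↑(η₂ (t z)) * I)
    with hFdef
  -- f = F on the open set S
  have hSopen : IsOpen ((fun z : ℂ => z * w) ⁻¹' Complex.slitPlane) :=
    Complex.isOpen_slitPlane.preimage (by fun_prop)
  have heqfF : ∀ z ∈ (fun z : ℂ => z * w) ⁻¹' Complex.slitPlane, f z = F z := by
    intro z hz
    have hzwne : z * w ≠ 0 := Complex.slitPlane_ne_zero hz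
    have hzne : z ≠ 0 := fun h => hzwne (by simp [h])
    have habsz : (0:ℝ) < ‖z‖ := norm_pos_iff.mpr hzne
    have habsw : ‖w‖ = 1 := by
      rw [hwdef, Complex.norm_exp]; norm_num
    have habszw : ‖(z * w)‖ = ‖z‖ := by
      rw [norm_mul, habsw, mul_one]
    -- radial part
    have hrad : Real.exp (α * u z) = ‖z‖ ^ α := by
      rw [hudef]
      simp only [Complex.log_re, habszw]
      rw [Real.rpow_def_of_pos habsz, mul_comm]
    -- angular part: arg z ≡ t z  (mod 2π)
    have hexpeq : Complex.exp ((z.arg : ℂ) * I) = Complex.exp ((t z : ℂ) * I) := by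
      have h1 : (‖z‖ : ℂ) * Complex.exp ((z.arg : ℂ) * I) = z :=
        Complex.norm_mul_exp_arg_mul_I z
      have h2 : (‖z‖ : ℂ) * Complex.exp ((t z : ℂ) * I) = z := by
        have h3 : (‖(z * w)‖ : ℂ) * Complex.exp (((z*w).arg : ℂ) * I) = z * w :=
          Complex.norm_mul_exp_arg_mul_I (z * w)
        rw [htdef]
        simp only [Complex.log_im]
        push_cast
        rw [habszw] at h3
        rw [add_mul, Complex.exp_add, ← mul_assoc, h3, hwdef, mul_assoc, ← Complex.exp_add]
        norm_num
      have := h1.trans h2.symm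
      exact mul_left_cancel₀ (by exact_mod_cast habsz.ne') this
    obtain ⟨n, hn⟩ := Complex.exp_eq_exp_iff_exists_int.mp hexpeq
    have hn' : z.arg = t z + n * (2 * Real.pi) := by
      have h4 : (z.arg : ℂ) * I = ((t z : ℂ) + (n : ℂ) * (2 * Real.pi)) * I := by
        rw [hn]; push_cast; ring
      have h5 := mul_right_cancel₀ Complex.I_ne_zero h4
      exact_mod_cast h5
    have he1 : η₁ z.arg = η₁ (t z) := by rw [hn']; exact (hη₁per.int_mul n) (t z)
    have he2 : η₂ z.arg = η₂ (t z) := by rw [hn']; exact (hη₂per.int_mul n) (t z)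
    rw [hf]
    show _ = (↑(Real.exp (α * u z)) : ℂ) * (↑(η₁ (t z)) + ↑(η₂ (t z)) * I)
    rw [hrad, he1, he2]
  -- derivative of log (z * w)
  have hmul : HasDerivAt (fun z : ℂ => z * w) w z₀ := hasDerivAt_mul_const w
  have hlog : HasDerivAt (fun z : ℂ => Complex.log (z * w)) ((z₀ * w)⁻¹ * w) z₀ :=
    by have := (Complex.hasDerivAt_log hslit).comp z₀ hmul; exact this
  have hder : (z₀ * w)⁻¹ * w = z₀⁻¹ := by
    rw [mul_inv, mul_assoc, inv_mul_cancel₀ hwne, mul_one]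
  rw [hder] at hlog
  set M : ℂ →L[ℝ] ℂ := ((1 : ℂ →L[ℂ] ℂ).smulRight z₀⁻¹).restrictScalars ℝ with hMdef
  have hG : HasFDerivAt (fun z : ℂ => Complex.log (z * w)) M z₀ :=
    hlog.hasFDerivAt.restrictScalars ℝ
  have hu : HasFDerivAt u (Complex.reCLM.comp M) z₀ :=
    (Complex.reCLM.hasFDerivAt).comp z₀ hG
  have ht : HasFDerivAt t (Complex.imCLM.comp M) z₀ :=
    ((Complex.imCLM.hasFDerivAt).comp z₀ hG).add_const θ₀
  have hq : HasFDerivAt (fun z => α * u z) (α • (Complex.reCLM.comp M)) z₀ := hu.const_mul α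
  have hA : HasFDerivAt (fun z => Real.exp (α * u z))
      (Real.exp (α * u z₀) • (α • (Complex.reCLM.comp M))) z₀ :=
    by have := (Real.hasDerivAt_exp (α * u z₀)).comp_hasFDerivAt z₀ hq; exact this
  have hA' : HasFDerivAt (fun z => (↑(Real.exp (α * u z)) : ℂ))
      (Complex.ofRealCLM.comp (Real.exp (α * u z₀) • (α • (Complex.reCLM.comp M)))) z₀ :=
    (Complex.ofRealCLM.hasFDerivAt).comp z₀ hA
  have hB : HasFDerivAt (fun z => η₁ (t z)) (deriv η₁ (t z₀) • (Complex.imCLM.comp M)) z₀ :=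
    ((hη₁d (t z₀)).hasDerivAt).comp_hasFDerivAt z₀ ht
  have hB' : HasFDerivAt (fun z => (↑(η₁ (t z)) : ℂ))
      (Complex.ofRealCLM.comp (deriv η₁ (t z₀) • (Complex.imCLM.comp M))) z₀ :=
    (Complex.ofRealCLM.hasFDerivAt).comp z₀ hB
  have hC : HasFDerivAt (fun z => η₂ (t z)) (deriv η₂ (t z₀) • (Complex.imCLM.comp M)) z₀ :=
    ((hη₂d (t z₀)).hasDerivAt).comp_hasFDerivAt z₀ ht
  have hC' : HasFDerivAt (fun z => (↑(η₂ (t z)) : ℂ) * I)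
      (I • (Complex.ofRealCLM.comp (deriv η₂ (t z₀) • (Complex.imCLM.comp M)))) z₀ :=
    ((Complex.ofRealCLM.hasFDerivAt).comp z₀ hC).mul_const I
  have hsum := hB'.add hC'
  have hFd := hA'.mul hsum
  have hfF : f =ᶠ[nhds z₀] F := Filter.eventuallyEq_of_mem (hSopen.mem_nhds hslit) heqfF
  have hfd := hFd.congr_of_eventuallyEq hfF
  have ht0 : t z₀ = θ₀ := by
    show (Complex.log (z₀ * w)).im + θ₀ = θ₀
    rw [hzw, Complex.log_im, Complex.arg_ofReal_of_nonneg habs.le, zero_add]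
  have hu0 : Real.exp (α * u z₀) = ‖z₀‖ ^ α := by
    show Real.exp (α * (Complex.log (z₀ * w)).re) = _
    rw [hzw, Complex.log_re, Complex.norm_real, Real.norm_of_nonneg habs.le, Real.rpow_def_of_pos habs,
      mul_comm]
  refine ⟨hfd.differentiableAt, ?_, ?_⟩
  · rw [wirtingerBar, hfd.fderiv]
    simp only [ContinuousLinearMap.add_apply, ContinuousLinearMap.smul_apply,
      ContinuousLinearMap.comp_apply, ContinuousLinearMap.smulRight_apply,
      ContinuousLinearMap.coe_restrictScalars', ContinuousLinearMap.one_apply,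
      Complex.ofRealCLM_apply, Complex.reCLM_apply, Complex.imCLM_apply, smul_eq_mul,
      ht0, hu0, hMdef]
    rw [← map_inv₀]
    generalize z₀⁻¹ = v
    have hconj : (starRingEnd ℂ) v = (v.re : ℂ) - (v.im : ℂ) * I := by
      simp [Complex.ext_iff]
    rw [hconj]
    simp only [one_mul, Complex.mul_im, Complex.mul_re, Complex.I_re, Complex.I_im]
    push_cast
    field_simp
    rw [Complex.ext_iff]
    constructor <;>
    · simp [Complex.mul_re, Complex.mul_im, Complex.add_re, Complex.add_im, Complex.sub_re,
        Complex.sub_im, ht0]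
      ring
  · rw [wirtinger, hfd.fderiv]
    simp only [ContinuousLinearMap.add_apply, ContinuousLinearMap.smul_apply,
      ContinuousLinearMap.comp_apply, ContinuousLinearMap.smulRight_apply,
      ContinuousLinearMap.coe_restrictScalars', ContinuousLinearMap.one_apply,
      Complex.ofRealCLM_apply, Complex.reCLM_apply, Complex.imCLM_apply, smul_eq_mul,
      ht0, hu0, hMdef]
    generalize z₀⁻¹ = v
    have hv : v = (v.re : ℂ) + (v.im : ℂ) * I := by simp [Complex.ext_iff]
    rw [hv]
    simp only [one_mul, Complex.mul_im, Complex.mul_re, Complex.I_re, Complex.I_im,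
      Complex.add_re, Complex.add_im, Complex.ofReal_re, Complex.ofReal_im]
    push_cast
    field_simp
    rw [Complex.ext_iff]
    constructor <;>
    · simp [Complex.mul_re, Complex.mul_im, Complex.add_re, Complex.add_im, Complex.sub_re,
        Complex.sub_im, ht0]
      ring

end BeltramiAux

/-- For `α > 0`, `k ≥ 1` a `2π`-periodic function and `η₁, η₂`
differentiable `2π`-periodic functions, the map
`f(z) = |z|^α (η₁(arg z) + i η₂(arg z))` satisfies the Beltrami equation
`∂̄f = μ ∂f` with `μ(z) = ((1 − k(arg z))/(1 + k(arg z))) z z̄⁻¹` at every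
`z ≠ 0` if and only if `η₁′ = −α k η₂` and `η₂′ = α k η₁` on `ℝ`. -/
theorem beltrami_generalized_radial_stretching (α : ℝ) (hα : 0 < α)
    (k η₁ η₂ : ℝ → ℝ)
    (hk1 : ∀ θ, 1 ≤ k θ) (hkper : Function.Periodic k (2 * Real.pi))
    (hη₁d : Differentiable ℝ η₁) (hη₂d : Differentiable ℝ η₂)
    (hη₁per : Function.Periodic η₁ (2 * Real.pi))
    (hη₂per : Function.Periodic η₂ (2 * Real.pi))
    (f μ : ℂ → ℂ)
    (hf : ∀ z : ℂ, f z =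
      (↑(‖z‖ ^ α) : ℂ) * (↑(η₁ z.arg) + ↑(η₂ z.arg) * Complex.I))
    (hμ : ∀ z : ℂ, μ z =
      (((1 - k z.arg) / (1 + k z.arg) : ℝ) : ℂ) * z * (starRingEnd ℂ z)⁻¹) :
    (∀ z : ℂ, z ≠ 0 → DifferentiableAt ℝ f z ∧ wirtingerBar f z = μ z * wirtinger f z) ↔
      (∀ θ : ℝ, deriv η₁ θ = -(α * k θ * η₂ θ) ∧ deriv η₂ θ = α * k θ * η₁ θ) := by
  have key := beltrami_key α η₁ η₂ hη₁d hη₂d hη₁per hη₂per f hf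
  have hρ : ∀ z : ℂ, z ≠ 0 → (↑(‖z‖ ^ α) : ℂ) ≠ 0 := fun z hz => by
    have : (0:ℝ) < ‖z‖ ^ α := Real.rpow_pos_of_pos (norm_pos_iff.mpr hz) α
    exact_mod_cast this.ne'
  have hK : ∀ a : ℝ, (1 + (k a : ℂ)) ≠ 0 := fun a => by
    have : (0:ℝ) < 1 + k a := by have := hk1 a; linarith
    exact_mod_cast this.ne'
  constructor
  · intro h θ
    set z : ℂ := Complex.exp (θ * Complex.I) with hzdef
    have hzne : z ≠ 0 := Complex.exp_ne_zero _
    obtain ⟨hd, heq⟩ := h z hzne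
    obtain ⟨_, hbar, hw⟩ := key z hzne
    rw [hbar, hw, hμ] at heq
    have hsys := (beltrami_algebra (↑(‖z‖ ^ α)) z (hρ z hzne) hzne (↑(k z.arg))
        (hK z.arg) (↑(η₁ z.arg) + ↑(η₂ z.arg) * Complex.I) (↑(deriv η₁ z.arg) + ↑(deriv η₂ z.arg) * Complex.I)
        (α : ℂ)).mp (by push_cast at heq ⊢; linear_combination heq)
    -- extract real and imaginary parts
    have hre := congrArg Complex.re hsys
    have him := congrArg Complex.im hsys
    simp only [Complex.add_re, Complex.add_im, Complex.mul_re, Complex.mul_im,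
      Complex.I_re, Complex.I_im, Complex.ofReal_re, Complex.ofReal_im] at hre him
    -- relate z.arg and θ
    have habsz : ‖z‖ = 1 := by
      rw [hzdef, Complex.norm_exp]; norm_num
    have hexpeq : Complex.exp ((z.arg : ℂ) * Complex.I) = Complex.exp ((θ : ℂ) * Complex.I) := by
      have h1 : (‖z‖ : ℂ) * Complex.exp ((z.arg : ℂ) * Complex.I) = z :=
        Complex.norm_mul_exp_arg_mul_I z
      rw [habsz] at h1
      simpa using h1
    obtain ⟨n, hn⟩ := Complex.exp_eq_exp_iff_exists_int.mp hexpeq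
    have hn' : z.arg = θ + n * (2 * Real.pi) := by
      have h4 : (z.arg : ℂ) * Complex.I = ((θ : ℂ) + (n : ℂ) * (2 * Real.pi)) * Complex.I := by
        rw [hn]; push_cast; ring
      have h5 := mul_right_cancel₀ Complex.I_ne_zero h4
      exact_mod_cast h5
    simp only [hn', (hkper.int_mul n) θ, (hη₁per.int_mul n) θ, (hη₂per.int_mul n) θ,
      ((periodic_deriv' hη₁per).int_mul n) θ, ((periodic_deriv' hη₂per).int_mul n) θ] at hre him
    constructor
    · linear_combination hre
    · linear_combination him
  · intro hsys z hzne
    obtain ⟨hd, hbar, hw⟩ := key z hzne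
    refine ⟨hd, ?_⟩
    rw [hbar, hw, hμ]
    obtain ⟨h1, h2⟩ := hsys z.arg
    have hg' : (↑(deriv η₁ z.arg) + ↑(deriv η₂ z.arg) * Complex.I : ℂ) =
        Complex.I * (α : ℂ) * (↑(k z.arg)) * (↑(η₁ z.arg) + ↑(η₂ z.arg) * Complex.I) := by
      rw [h1, h2]
      push_cast
      linear_combination (-((α:ℂ) * (k z.arg) * (η₂ z.arg))) * Complex.I_sq
    have := (beltrami_algebra (↑(‖z‖ ^ α)) z (hρ z hzne) hzne (↑(k z.arg))
        (hK z.arg) (↑(η₁ z.arg) + ↑(η₂ z.arg) * Complex.I) (↑(deriv η₁ z.arg) + ↑(deriv η₂ z.arg) * Complex.I)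
        (α : ℂ)).mpr hg'
    push_cast at this ⊢
    linear_combination this
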